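/- Fix λ ∈ (0,1) and set χ = λ(1−λ). Fix real numbers ξ_i < ξ_j and u_i, u_j. For t > 0 define integers n_i(t) = ⌊λ² t + λ 2^{5/3} χ^{1/3} ξ_i t^{2/3}⌋, n_j(t) = ⌊λ² t + λ 2^{5/3} χ^{1/3} ξ_j t^{2/3}⌋, x_i(t) = ⌊(1−2λ) t − 2^{5/3} χ^{1/3} ξ_i t^{2/3} − 2^{1/3} χ^{2/3} (u_i/λ) t^{1/3}⌋, x_j(t) = ⌊(1−2λ) t − 2^{5/3} χ^{1/3} ξ_j t^{2/3} − 2^{1/3} χ^{2/3} (u_j/λ) t^{1/3}⌋, and (noting that for all sufficiently large t one has x_i(t) − x_j(t) ≥ n_j(t) − n_i(t) ≥ 1) set Q(t) = (1−λ)^{(n_i(t)−n_j(t)) + (x_i(t)−x_j(t))} · λ^{n_j(t)−n_i(t)} · binom(x_i(t)−x_j(t)−1, n_j(t)−n_i(t)−1). Then lim_{t→∞} (2^{1/3} χ^{2/3} t^{1/3} / λ) · Q(t) = exp( −(u_j−u_i)² / (4(ξ_j−ξ_i)) ) / √(4π(ξ_j−ξ_i)). -/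

import Mathlib

open Filter Topology Nat

/-- The KPZ-scaled particle index `n(t) = ⌊λ² t + λ 2^{5/3} χ^{1/3} ξ t^{2/3}⌋`,
with `χ = λ(1−λ)` (scaling (A.6) of the paper). -/
noncomputable def nIdx (lam ξ : ℝ) (t : ℝ) : ℤ :=
  ⌊lam ^ 2 * t + lam * 2 ^ ((5:ℝ)/3) * (lam * (1 - lam)) ^ ((1:ℝ)/3) * ξ * t ^ ((2:ℝ)/3)⌋

/-- The KPZ-scaled space point
`x(t) = ⌊(1−2λ) t − 2^{5/3} χ^{1/3} ξ t^{2/3} − 2^{1/3} χ^{2/3} (u/λ) t^{1/3}⌋`,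
with `χ = λ(1−λ)` (scaling (A.6) of the paper). -/
noncomputable def xIdx (lam ξ u : ℝ) (t : ℝ) : ℤ :=
  ⌊(1 - 2 * lam) * t - 2 ^ ((5:ℝ)/3) * (lam * (1 - lam)) ^ ((1:ℝ)/3) * ξ * t ^ ((2:ℝ)/3)
    - 2 ^ ((1:ℝ)/3) * (lam * (1 - lam)) ^ ((2:ℝ)/3) * (u / lam) * t ^ ((1:ℝ)/3)⌋

/-- The conjugated transition kernel
`Q(t) = (1−λ)^{(n_i−n_j)+(x_i−x_j)} λ^{n_j−n_i} · binom(x_i−x_j−1, n_j−n_i−1)`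
of (A.7) of the paper, under the KPZ scaling (A.6). -/
noncomputable def Qkernel (lam ξi ξj ui uj : ℝ) (t : ℝ) : ℝ :=
  (1 - lam) ^ ((nIdx lam ξi t - nIdx lam ξj t) + (xIdx lam ξi ui t - xIdx lam ξj uj t))
    * lam ^ (nIdx lam ξj t - nIdx lam ξi t)
    * ((xIdx lam ξi ui t - xIdx lam ξj uj t - 1).toNat.choose
        (nIdx lam ξj t - nIdx lam ξi t - 1).toNat : ℝ)

/-- Lemma A.2 of the paper. Under the KPZ scaling, the
conjugated transition kernel converges to the Gaussian heat kernel with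
diffusion time `ξ_j − ξ_i`:
`lim_{t→∞} (2^{1/3} χ^{2/3} t^{1/3} / λ) Q(t)
  = e^{−(u_j−u_i)²/(4(ξ_j−ξ_i))} / √(4π(ξ_j−ξ_i))`. -/


noncomputable def phiKL' (lam e : ℝ) : ℝ :=
  (lam + e) * (Real.log (lam + e) - Real.log lam)
    + (1 - lam - e) * (Real.log (1 - lam - e) - Real.log (1 - lam))

lemma phiKL'_zero (lam : ℝ) : phiKL' lam 0 = 0 := by
  simp [phiKL']

lemma hasDerivAt_phiKL' (lam : ℝ) {e : ℝ} (h1 : 0 < lam + e) (h2 : 0 < 1 - lam - e) :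
    HasDerivAt (phiKL' lam)
      (Real.log (lam + e) - Real.log lam - (Real.log (1 - lam - e) - Real.log (1 - lam))) e := by
  have hA : HasDerivAt (fun x : ℝ => lam + x) 1 e := (hasDerivAt_id e).const_add lam
  have hB : HasDerivAt (fun x : ℝ => 1 - lam - x) (-1) e := by
    simpa using ((hasDerivAt_id e).const_sub (1 - lam))
  have hlogA : HasDerivAt (fun x : ℝ => Real.log (lam + x)) (1 / (lam + e)) e := by
    simpa [Function.comp_def] using (Real.hasDerivAt_log h1.ne').comp e hA
  have hlogB : HasDerivAt (fun x : ℝ => Real.log (1 - lam - x)) (-1 / (1 - lam - e)) e := by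
    have := (Real.hasDerivAt_log h2.ne').comp e hB
    simpa [div_eq_mul_inv, Function.comp_def] using this
  have h1' : HasDerivAt (fun x : ℝ => (lam + x) * (Real.log (lam + x) - Real.log lam))
      (1 * (Real.log (lam + e) - Real.log lam) + (lam + e) * (1 / (lam + e))) e :=
    hA.mul (hlogA.sub_const _)
  have h2' : HasDerivAt (fun x : ℝ => (1 - lam - x) * (Real.log (1 - lam - x) - Real.log (1 - lam)))
      ((-1) * (Real.log (1 - lam - e) - Real.log (1 - lam)) + (1 - lam - e) * (-1 / (1 - lam - e))) e :=
    hB.mul (hlogB.sub_const _)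
  have := h1'.add h2'
  have keq : 1 * (Real.log (lam + e) - Real.log lam) + (lam + e) * (1 / (lam + e))
      + ((-1) * (Real.log (1 - lam - e) - Real.log (1 - lam)) + (1 - lam - e) * (-1 / (1 - lam - e)))
      = Real.log (lam + e) - Real.log lam - (Real.log (1 - lam - e) - Real.log (1 - lam)) := by
    field_simp
    ring
  rw [keq] at this
  exact this

lemma phiKL'_div_sq_tendsto (lam : ℝ) (h0 : 0 < lam) (h1 : lam < 1) :
    Tendsto (fun e => phiKL' lam e / e ^ 2) (𝓝[≠] (0:ℝ))
      (𝓝 (1 / (2 * (lam * (1 - lam))))) := by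
  have hnb : ∀ᶠ e in 𝓝 (0:ℝ), 0 < lam + e ∧ 0 < 1 - lam - e := by
    have : ∀ᶠ e in 𝓝 (0:ℝ), e ∈ Set.Ioo (-lam) (1 - lam) :=
      Ioo_mem_nhds (by linarith) (by linarith)
    filter_upwards [this] with e he
    exact ⟨by linarith [he.1], by linarith [he.2]⟩
  -- second l'hopital: f' / g'
  have hdiv2 : Tendsto (fun e => (Real.log (lam + e) - Real.log lam
      - (Real.log (1 - lam - e) - Real.log (1 - lam))) / (2 * e)) (𝓝[≠] (0:ℝ))
      (𝓝 (1 / (2 * (lam * (1 - lam))))) := by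
    apply HasDerivAt.lhopital_zero_nhdsNE (f' := fun e => 1 / (lam + e) + 1 / (1 - lam - e))
      (g' := fun _ => (2:ℝ))
    · filter_upwards [nhdsWithin_le_nhds hnb] with e he
      have hA : HasDerivAt (fun x : ℝ => lam + x) 1 e := (hasDerivAt_id e).const_add lam
      have hB : HasDerivAt (fun x : ℝ => 1 - lam - x) (-1) e := by
        simpa using ((hasDerivAt_id e).const_sub (1 - lam))
      have hlogA : HasDerivAt (fun x : ℝ => Real.log (lam + x)) (1 / (lam + e)) e := by
        simpa [Function.comp_def] using (Real.hasDerivAt_log he.1.ne').comp e hA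
      have hlogB : HasDerivAt (fun x : ℝ => Real.log (1 - lam - x)) (-1 / (1 - lam - e)) e := by
        have := (Real.hasDerivAt_log he.2.ne').comp e hB
        simpa [div_eq_mul_inv, Function.comp_def] using this
      have := ((hlogA.sub_const (Real.log lam)).sub (hlogB.sub_const (Real.log (1 - lam))))
      have keq : 1 / (lam + e) - (-1 / (1 - lam - e)) = 1 / (lam + e) + 1 / (1 - lam - e) := by ring
      rw [keq] at this
      exact this
    · filter_upwards with e
      simpa using (hasDerivAt_id e).const_mul (2:ℝ)
    · filter_upwards with e; norm_num
    · have hc : ContinuousAt (fun e : ℝ => Real.log (lam + e) - Real.log lam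
          - (Real.log (1 - lam - e) - Real.log (1 - lam))) 0 := by
        have c1 : ContinuousAt (fun e : ℝ => Real.log (lam + e)) 0 :=
          (Real.continuousAt_log (by simpa using h0.ne')).comp (by fun_prop)
        have c2 : ContinuousAt (fun e : ℝ => Real.log (1 - lam - e)) 0 := by
          apply (Real.continuousAt_log (by simp; linarith)).comp (by fun_prop)
        exact ((c1.sub continuousAt_const).sub (c2.sub continuousAt_const))
      simpa using hc.tendsto.mono_left nhdsWithin_le_nhds
    · have : Tendsto (fun e : ℝ => 2 * e) (𝓝 0) (𝓝 (2 * 0)) :=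
        (continuous_const.mul continuous_id).tendsto 0
      simpa using this.mono_left nhdsWithin_le_nhds
    · have hc : ContinuousAt (fun e : ℝ => (1 / (lam + e) + 1 / (1 - lam - e)) / 2) 0 := by
        have c1 : ContinuousAt (fun e : ℝ => 1 / (lam + e)) 0 := by
          apply ContinuousAt.div continuousAt_const (by fun_prop) (by simpa using h0.ne')
        have c2 : ContinuousAt (fun e : ℝ => 1 / (1 - lam - e)) 0 := by
          apply ContinuousAt.div continuousAt_const (by fun_prop) (by simp; linarith)
        exact (c1.add c2).div continuousAt_const (by norm_num)
      have hl : lam ≠ 0 := h0.ne'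
      have hl1 : (1:ℝ) - lam ≠ 0 := by linarith
      have hval : (1 / (lam + 0) + 1 / (1 - lam - 0)) / 2 = 1 / (2 * (lam * (1 - lam))) := by
        field_simp
        ring
      have := hc.tendsto.mono_left (nhdsWithin_le_nhds (s := {(0:ℝ)}ᶜ))
      rw [hval] at this
      exact this
  -- first l'hopital
  apply HasDerivAt.lhopital_zero_nhdsNE
    (f' := fun e => Real.log (lam + e) - Real.log lam
      - (Real.log (1 - lam - e) - Real.log (1 - lam)))
    (g' := fun e => 2 * e)
  · filter_upwards [nhdsWithin_le_nhds hnb] with e he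
    exact hasDerivAt_phiKL' lam he.1 he.2
  · filter_upwards with e
    simpa [mul_comm] using (hasDerivAt_pow 2 e)
  · filter_upwards [self_mem_nhdsWithin] with e he
    simpa using he
  · have hc : ContinuousAt (phiKL' lam) 0 := by
      have c1 : ContinuousAt (fun e : ℝ => Real.log (lam + e)) 0 :=
        (Real.continuousAt_log (by simpa using h0.ne')).comp (by fun_prop)
      have c2 : ContinuousAt (fun e : ℝ => Real.log (1 - lam - e)) 0 := by
        apply (Real.continuousAt_log (by simp; linarith)).comp (by fun_prop)
      apply ContinuousAt.add
      · exact (by fun_prop : ContinuousAt (fun e : ℝ => lam + e) 0).mul (c1.sub continuousAt_const)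
      · exact (by fun_prop : ContinuousAt (fun e : ℝ => 1 - lam - e) 0).mul
          (c2.sub continuousAt_const)
    have := hc.tendsto
    rw [phiKL'_zero] at this
    exact this.mono_left nhdsWithin_le_nhds
  · have : Tendsto (fun e : ℝ => e ^ 2) (𝓝 0) (𝓝 ((0:ℝ) ^ 2)) :=
      (continuous_pow 2).tendsto 0
    simpa using this.mono_left nhdsWithin_le_nhds
  · exact hdiv2



noncomputable def psiKL (lam e : ℝ) : ℝ :=
  if e = 0 then 1 / (2 * (lam * (1 - lam))) else phiKL' lam e / e ^ 2

lemma phiKL'_eq_sq_mul_psi (lam e : ℝ) : phiKL' lam e = e ^ 2 * psiKL lam e := by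
  rcases eq_or_ne e 0 with h | h
  · simp [h, phiKL']
  · rw [psiKL, if_neg h]
    field_simp

lemma psiKL_tendsto (lam : ℝ) (h0 : 0 < lam) (h1 : lam < 1) :
    Tendsto (psiKL lam) (𝓝 (0:ℝ)) (𝓝 (1 / (2 * (lam * (1 - lam))))) := by
  rw [← nhdsNE_sup_pure (0:ℝ)]
  rw [tendsto_sup]
  constructor
  · apply Tendsto.congr' _ (phiKL'_div_sq_tendsto lam h0 h1)
    filter_upwards [self_mem_nhdsWithin] with e he
    have h' : e ≠ 0 := he
    rw [psiKL, if_neg h']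
  · have : psiKL lam 0 = 1 / (2 * (lam * (1 - lam))) := if_pos rfl
    rw [← this]
    exact tendsto_pure_nhds _ _

-- factorial via stirling
lemma factorial_eq_stirling (n : ℕ) (hn : 1 ≤ n) :
    (n ! : ℝ) = Stirling.stirlingSeq n * (Real.sqrt (2 * n) * ((n : ℝ) / Real.exp 1) ^ n) := by
  have h1 : (0:ℝ) < Real.sqrt (2 * n) := Real.sqrt_pos.2 (by positivity)
  have h2 : (0:ℝ) < ((n : ℝ) / Real.exp 1) ^ n := by
    apply pow_pos
    apply div_pos (by exact_mod_cast hn) (Real.exp_pos 1)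
  rw [Stirling.stirlingSeq]
  field_simp

lemma stirlingSeq_pos (n : ℕ) (hn : 1 ≤ n) : 0 < Stirling.stirlingSeq n := by
  apply _root_.div_pos
  · exact_mod_cast n.factorial_pos
  · apply mul_pos (Real.sqrt_pos.2 (by positivity))
    apply pow_pos (div_pos (by exact_mod_cast hn) (Real.exp_pos 1))

-- the algebraic identity
lemma expr_eq (x lam : ℝ) (p q : ℕ) (hp : 1 ≤ p) (hq : 1 ≤ q) :
    x * lam ^ (p + 1) * (1 - lam) ^ q * ((p + q).choose p : ℝ)
      = (Stirling.stirlingSeq (p + q) / (Stirling.stirlingSeq p * Stirling.stirlingSeq q))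
        * (x * Real.sqrt (2 * (p + q : ℕ)) / (Real.sqrt (2 * p) * Real.sqrt (2 * q)))
        * (lam ^ (p + 1) * (1 - lam) ^ q
            * (((p + q : ℕ) : ℝ) ^ (p + q) / ((p : ℝ) ^ p * (q : ℝ) ^ q))) := by
  have hcast : ((p + q).choose p : ℝ) = ((p + q)! : ℝ) / ((p ! : ℝ) * (q ! : ℝ)) := by
    rw [Nat.cast_choose ℝ (Nat.le_add_right p q), Nat.add_sub_cancel_left]
  rw [hcast, factorial_eq_stirling (p+q) (le_trans hp (Nat.le_add_right p q)),
    factorial_eq_stirling p hp, factorial_eq_stirling q hq]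
  have s1 : Stirling.stirlingSeq p ≠ 0 := (stirlingSeq_pos p hp).ne'
  have s2 : Stirling.stirlingSeq q ≠ 0 := (stirlingSeq_pos q hq).ne'
  have r1 : Real.sqrt (2 * p) ≠ 0 := (Real.sqrt_pos.2 (by positivity)).ne'
  have r2 : Real.sqrt (2 * q) ≠ 0 := (Real.sqrt_pos.2 (by positivity)).ne'
  have hp0 : ((p:ℝ)) ≠ 0 := by positivity
  have hq0 : ((q:ℝ)) ≠ 0 := by positivity
  have he : Real.exp 1 ≠ 0 := (Real.exp_pos 1).ne'
  have hpq : ((p:ℝ) + q) ^ (p + q) = ((p:ℝ)+q) ^ p * ((p:ℝ)+q) ^ q := pow_add _ p q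
  have hexp : Real.exp 1 ^ (p + q) = Real.exp 1 ^ p * Real.exp 1 ^ q := pow_add _ p q
  field_simp
  push_cast
  rw [div_pow, div_pow, div_pow, hexp]
  field_simp



lemma logV_eq (lam A B : ℝ) (hlam0 : 0 < lam) (hlam1 : lam < 1) (hA : 0 < A) (hB : 0 < B) :
    Real.log lam + A * Real.log lam + B * Real.log (1 - lam)
      + (A + B) * Real.log (A + B) - A * Real.log A - B * Real.log B
    = Real.log lam - ((A + B) * ((A - lam * (A + B)) / (A + B)) ^ 2)
        * psiKL lam ((A - lam * (A + B)) / (A + B)) := by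
  have hK : 0 < A + B := by linarith
  have heps1 : lam + (A - lam * (A + B)) / (A + B) = A / (A + B) := by field_simp; ring
  have heps2 : 1 - lam - (A - lam * (A + B)) / (A + B) = B / (A + B) := by field_simp; ring
  have hphi : ((A + B) * ((A - lam * (A + B)) / (A + B)) ^ 2)
      * psiKL lam ((A - lam * (A + B)) / (A + B))
      = (A + B) * phiKL' lam ((A - lam * (A + B)) / (A + B)) := by
    rw [phiKL'_eq_sq_mul_psi]; ring
  rw [hphi, phiKL', heps1, heps2, Real.log_div hA.ne' hK.ne', Real.log_div hB.ne' hK.ne']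
  field_simp
  ring

lemma div_T2_tendsto (f : ℝ → ℝ) (L c' : ℝ)
    (h : Tendsto (fun t => (f t - L * t ^ ((2:ℝ)/3)) / t ^ ((1:ℝ)/3)) atTop (𝓝 c')) :
    Tendsto (fun t => f t / t ^ ((2:ℝ)/3)) atTop (𝓝 L) := by
  have h13 : Tendsto (fun t : ℝ => t ^ (-((1:ℝ)/3))) atTop (𝓝 0) :=
    tendsto_rpow_neg_atTop (by norm_num)
  have h2 := h.mul h13
  rw [mul_zero] at h2
  have h3 := tendsto_const_nhds (x := L) (f := atTop (α := ℝ)) |>.add h2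
  rw [add_zero] at h3
  apply h3.congr'
  filter_upwards [eventually_ge_atTop (1:ℝ)] with t ht1
  have ht : (0:ℝ) < t := lt_of_lt_of_le one_pos ht1
  have hT1 : (0:ℝ) < t ^ ((1:ℝ)/3) := Real.rpow_pos_of_pos ht _
  have hT2 : (0:ℝ) < t ^ ((2:ℝ)/3) := Real.rpow_pos_of_pos ht _
  have hmul : t ^ ((1:ℝ)/3) * t ^ ((1:ℝ)/3) = t ^ ((2:ℝ)/3) := by
    rw [← Real.rpow_add ht]; norm_num
  rw [Real.rpow_neg ht.le, div_eq_mul_inv (f t - L * t ^ ((2:ℝ)/3)), mul_assoc, ← mul_inv,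
    ← div_eq_mul_inv, hmul, sub_div, mul_div_assoc, div_self hT2.ne', mul_one]
  ring

lemma master (lam a c : ℝ) (hlam0 : 0 < lam) (hlam1 : lam < 1) (ha : 0 < a)
    (m d : ℝ → ℕ)
    (hm : Tendsto (fun t => ((m t : ℝ) - lam * a * t ^ ((2:ℝ)/3)) / t ^ ((1:ℝ)/3)) atTop (𝓝 0))
    (hd : Tendsto (fun t => ((d t : ℝ) - a * t ^ ((2:ℝ)/3) - c * t ^ ((1:ℝ)/3)) / t ^ ((1:ℝ)/3))
      atTop (𝓝 0)) :
    Tendsto (fun t => t ^ ((1:ℝ)/3) * lam ^ m t * (1 - lam) ^ (d t - m t)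
        * ((d t - 1).choose (m t - 1) : ℝ)) atTop
      (𝓝 (lam * Real.exp (-(lam * c ^ 2 / (2 * a * (1 - lam))))
        / Real.sqrt (2 * Real.pi * (lam * (1 - lam)) * a))) := by
  have hchi : (0:ℝ) < lam * (1 - lam) := by nlinarith
  have h1lam : (0:ℝ) < 1 - lam := by linarith
  have hT1 : Tendsto (fun t : ℝ => t ^ ((1:ℝ)/3)) atTop atTop := tendsto_rpow_atTop (by norm_num)
  have hT2 : Tendsto (fun t : ℝ => t ^ ((2:ℝ)/3)) atTop atTop := tendsto_rpow_atTop (by norm_num)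
  have h13 : Tendsto (fun t : ℝ => t ^ (-((1:ℝ)/3))) atTop (𝓝 0) :=
    tendsto_rpow_neg_atTop (by norm_num)
  -- first-order limits
  have hm2 : Tendsto (fun t => (m t : ℝ) / t ^ ((2:ℝ)/3)) atTop (𝓝 (lam * a)) :=
    div_T2_tendsto _ _ 0 hm
  have hd1 : Tendsto (fun t => ((d t : ℝ) - a * t ^ ((2:ℝ)/3)) / t ^ ((1:ℝ)/3)) atTop (𝓝 c) := by
    have := hd.add (tendsto_const_nhds (x := c) (f := atTop (α := ℝ)))
    rw [zero_add] at this
    apply this.congr'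
    filter_upwards [eventually_ge_atTop (1:ℝ)] with t ht1
    have ht : (0:ℝ) < t := lt_of_lt_of_le one_pos ht1
    have hT1' : (0:ℝ) < t ^ ((1:ℝ)/3) := Real.rpow_pos_of_pos ht _
    field_simp
    ring
  have hd2 : Tendsto (fun t => (d t : ℝ) / t ^ ((2:ℝ)/3)) atTop (𝓝 a) :=
    div_T2_tendsto _ _ c hd1
  -- m and d - m go to infinity
  have hmR : Tendsto (fun t => (m t : ℝ)) atTop atTop := by
    apply tendsto_atTop_mono' atTop (f₁ := fun t => lam * a / 2 * t ^ ((2:ℝ)/3))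
    · filter_upwards [hm2.eventually (eventually_ge_nhds (show lam * a / 2 < lam * a by nlinarith)),
        eventually_ge_atTop (1:ℝ)] with t h1 ht1
      have ht : (0:ℝ) < t := lt_of_lt_of_le one_pos ht1
      have hT2' : (0:ℝ) < t ^ ((2:ℝ)/3) := Real.rpow_pos_of_pos ht _
      calc lam * a / 2 * t ^ ((2:ℝ)/3) ≤ (m t : ℝ) / t ^ ((2:ℝ)/3) * t ^ ((2:ℝ)/3) := by
            apply mul_le_mul_of_nonneg_right h1 hT2'.le
        _ = (m t : ℝ) := by field_simp
    · exact hT2.const_mul_atTop (by positivity)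
  have hdmR : Tendsto (fun t => (d t : ℝ) - (m t : ℝ)) atTop atTop := by
    have hdm2 : Tendsto (fun t => ((d t : ℝ) - (m t : ℝ)) / t ^ ((2:ℝ)/3)) atTop
        (𝓝 (a - lam * a)) := by
      have := hd2.sub hm2
      apply this.congr
      intro t; rw [sub_div]
    have hpos : (0:ℝ) < a - lam * a := by nlinarith
    apply tendsto_atTop_mono' atTop (f₁ := fun t => (a - lam * a) / 2 * t ^ ((2:ℝ)/3))
    · filter_upwards [hdm2.eventually (eventually_ge_nhds
        (show (a - lam * a) / 2 < a - lam * a by linarith)),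
        eventually_ge_atTop (1:ℝ)] with t h1 ht1
      have ht : (0:ℝ) < t := lt_of_lt_of_le one_pos ht1
      have hT2' : (0:ℝ) < t ^ ((2:ℝ)/3) := Real.rpow_pos_of_pos ht _
      calc (a - lam * a) / 2 * t ^ ((2:ℝ)/3)
          ≤ ((d t : ℝ) - (m t : ℝ)) / t ^ ((2:ℝ)/3) * t ^ ((2:ℝ)/3) :=
            mul_le_mul_of_nonneg_right h1 hT2'.le
        _ = (d t : ℝ) - (m t : ℝ) := by field_simp
    · exact hT2.const_mul_atTop (by positivity)
  -- good event
  have hgood : ∀ᶠ t in atTop, 1 ≤ t ∧ 2 ≤ m t ∧ m t + 3 ≤ d t := by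
    filter_upwards [eventually_ge_atTop (1:ℝ), hmR.eventually_ge_atTop (2:ℝ),
      hdmR.eventually_ge_atTop (3:ℝ)] with t ht1 h2 h3
    refine ⟨ht1, by exact_mod_cast h2, ?_⟩
    have : (m t : ℝ) + 3 ≤ (d t : ℝ) := by linarith
    exact_mod_cast this

  -- cast identities
  have hcast : ∀ᶠ t in atTop, ((m t - 1 : ℕ) : ℝ) = (m t : ℝ) - 1
      ∧ ((d t - m t : ℕ) : ℝ) = (d t : ℝ) - (m t : ℝ)
      ∧ ((d t - 1 : ℕ) : ℝ) = (d t : ℝ) - 1 := by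
    filter_upwards [hgood] with t ht
    obtain ⟨ht1, h2, h3⟩ := ht
    refine ⟨?_, ?_, ?_⟩
    · rw [Nat.cast_sub (by omega)]; norm_num
    · rw [Nat.cast_sub (by omega)]
    · rw [Nat.cast_sub (by omega)]; norm_num
  have hinvT2 : Tendsto (fun t : ℝ => (t ^ ((2:ℝ)/3))⁻¹) atTop (𝓝 0) := hT2.inv_tendsto_atTop
  have hinvT1 : Tendsto (fun t : ℝ => (t ^ ((1:ℝ)/3))⁻¹) atTop (𝓝 0) := hT1.inv_tendsto_atTop
  have hA2 : Tendsto (fun t => ((m t - 1 : ℕ) : ℝ) / t ^ ((2:ℝ)/3)) atTop (𝓝 (lam * a)) := by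
    have h0 := hm2.sub hinvT2
    rw [sub_zero] at h0
    apply h0.congr'
    filter_upwards [hcast] with t hc
    rw [hc.1, sub_div, one_div]
  have hB2 : Tendsto (fun t => ((d t - m t : ℕ) : ℝ) / t ^ ((2:ℝ)/3)) atTop
      (𝓝 ((1 - lam) * a)) := by
    have h0 := hd2.sub hm2
    have hval : a - lam * a = (1 - lam) * a := by ring
    rw [hval] at h0
    apply h0.congr'
    filter_upwards [hcast] with t hc
    rw [hc.2.1, sub_div]
  have hK2 : Tendsto (fun t => ((d t - 1 : ℕ) : ℝ) / t ^ ((2:ℝ)/3)) atTop (𝓝 a) := by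
    have h0 := hd2.sub hinvT2
    rw [sub_zero] at h0
    apply h0.congr'
    filter_upwards [hcast] with t hc
    rw [hc.2.2, sub_div, one_div]
  have hKinv : Tendsto (fun t => t ^ ((2:ℝ)/3) / ((d t - 1 : ℕ) : ℝ)) atTop (𝓝 a⁻¹) := by
    apply (hK2.inv₀ ha.ne').congr
    intro t
    rw [inv_div]
  -- (A - lam K)/T1 → -(lam c)
  have hAK : Tendsto (fun t => (((m t - 1 : ℕ) : ℝ) - lam * ((d t - 1 : ℕ) : ℝ)) / t ^ ((1:ℝ)/3))
      atTop (𝓝 (-(lam * c))) := by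
    have h0 := ((hm.sub (hd.const_mul lam)).sub_const (lam * c)).add (hinvT1.const_mul (lam - 1))
    have hval : 0 - lam * 0 - lam * c + (lam - 1) * 0 = -(lam * c) := by ring
    rw [hval] at h0
    apply h0.congr'
    filter_upwards [hcast, eventually_ge_atTop (1:ℝ)] with t hc ht1
    have ht : (0:ℝ) < t := lt_of_lt_of_le one_pos ht1
    have hT1' : (0:ℝ) < t ^ ((1:ℝ)/3) := Real.rpow_pos_of_pos ht _
    rw [hc.1, hc.2.2]
    field_simp
    all_goals ring
  -- epsilon
  have hKposEv : ∀ᶠ t in atTop, (0:ℝ) < ((m t - 1 : ℕ) : ℝ) ∧ (0:ℝ) < ((d t - m t : ℕ) : ℝ)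
      ∧ (0:ℝ) < ((d t - 1 : ℕ) : ℝ) := by
    filter_upwards [hgood] with t ht
    obtain ⟨ht1, h2, h3⟩ := ht
    refine ⟨?_, ?_, ?_⟩ <;> (exact_mod_cast Nat.pos_of_ne_zero (by omega))
  have heps0 : Tendsto (fun t => (((m t - 1 : ℕ) : ℝ) - lam * ((d t - 1 : ℕ) : ℝ))
      / ((d t - 1 : ℕ) : ℝ)) atTop (𝓝 0) := by
    have h0 := hAK.mul (hKinv.mul h13)
    have hval : -(lam * c) * (a⁻¹ * 0) = 0 := by ring
    rw [hval] at h0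
    apply h0.congr'
    filter_upwards [hcast, hKposEv, eventually_ge_atTop (1:ℝ)] with t hc hK ht1
    have ht : (0:ℝ) < t := lt_of_lt_of_le one_pos ht1
    have hT1' : (0:ℝ) < t ^ ((1:ℝ)/3) := Real.rpow_pos_of_pos ht _
    have hmul : t ^ ((1:ℝ)/3) * t ^ ((1:ℝ)/3) = t ^ ((2:ℝ)/3) := by
      rw [← Real.rpow_add ht]; norm_num
    rw [Real.rpow_neg ht.le, ← hmul]
    field_simp [hT1'.ne', hK.2.2.ne']
  have hKe2 : Tendsto (fun t => ((d t - 1 : ℕ) : ℝ)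
      * ((((m t - 1 : ℕ) : ℝ) - lam * ((d t - 1 : ℕ) : ℝ)) / ((d t - 1 : ℕ) : ℝ)) ^ 2)
      atTop (𝓝 (lam ^ 2 * c ^ 2 / a)) := by
    have h0 := (hAK.pow 2).mul hKinv
    have hval : (-(lam * c)) ^ 2 * a⁻¹ = lam ^ 2 * c ^ 2 / a := by
      field_simp
    rw [hval] at h0
    apply h0.congr'
    filter_upwards [hKposEv, eventually_ge_atTop (1:ℝ)] with t hK ht1
    have ht : (0:ℝ) < t := lt_of_lt_of_le one_pos ht1
    have hT1' : (0:ℝ) < t ^ ((1:ℝ)/3) := Real.rpow_pos_of_pos ht _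
    have hmul : t ^ ((1:ℝ)/3) * t ^ ((1:ℝ)/3) = t ^ ((2:ℝ)/3) := by
      rw [← Real.rpow_add ht]; norm_num
    rw [← hmul]
    rw [div_pow, div_pow, sq (t ^ ((1:ℝ)/3))]
    field_simp [hT1'.ne', hK.2.2.ne']
  have hpsi : Tendsto (fun t => psiKL lam ((((m t - 1 : ℕ) : ℝ) - lam * ((d t - 1 : ℕ) : ℝ))
      / ((d t - 1 : ℕ) : ℝ))) atTop (𝓝 (1 / (2 * (lam * (1 - lam))))) :=
    (psiKL_tendsto lam hlam0 hlam1).comp heps0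
  -- log V limit
  have hlogV : Tendsto (fun t => Real.log lam - (((d t - 1 : ℕ) : ℝ)
      * ((((m t - 1 : ℕ) : ℝ) - lam * ((d t - 1 : ℕ) : ℝ)) / ((d t - 1 : ℕ) : ℝ)) ^ 2)
      * psiKL lam ((((m t - 1 : ℕ) : ℝ) - lam * ((d t - 1 : ℕ) : ℝ)) / ((d t - 1 : ℕ) : ℝ)))
      atTop (𝓝 (Real.log lam - lam ^ 2 * c ^ 2 / a * (1 / (2 * (lam * (1 - lam)))))) :=
    tendsto_const_nhds.sub (hKe2.mul hpsi)
  -- V part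
  have hV : Tendsto (fun t => lam ^ m t * (1 - lam) ^ (d t - m t)
      * (((d t - 1 : ℕ) : ℝ) ^ (d t - 1)
        / (((m t - 1 : ℕ) : ℝ) ^ (m t - 1) * ((d t - m t : ℕ) : ℝ) ^ (d t - m t))))
      atTop (𝓝 (lam * Real.exp (-(lam * c ^ 2 / (2 * a * (1 - lam)))))) := by
    have hexp := (Real.continuous_exp.tendsto _).comp hlogV
    have hval : Real.exp (Real.log lam - lam ^ 2 * c ^ 2 / a * (1 / (2 * (lam * (1 - lam)))))
        = lam * Real.exp (-(lam * c ^ 2 / (2 * a * (1 - lam)))) := by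
      have h1l : (0:ℝ) < 1 - lam := by linarith
      have hexpeq : lam ^ 2 * c ^ 2 / a * (1 / (2 * (lam * (1 - lam))))
          = lam * c ^ 2 / (2 * a * (1 - lam)) := by
        field_simp
      rw [sub_eq_add_neg, Real.exp_add, Real.exp_log hlam0, hexpeq]
    rw [hval] at hexp
    apply hexp.congr'
    filter_upwards [hgood, hKposEv] with t htg hKp
    obtain ⟨ht1, h2m, h3d⟩ := htg
    obtain ⟨hApos, hBpos, hKpos⟩ := hKp
    have hKAB : ((d t - 1 : ℕ) : ℝ) = ((m t - 1 : ℕ) : ℝ) + ((d t - m t : ℕ) : ℝ) := by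
      have : (d t - 1 : ℕ) = (m t - 1) + (d t - m t) := by omega
      rw [this]; push_cast; ring
    have hmA : (m t : ℝ) = ((m t - 1 : ℕ) : ℝ) + 1 := by
      have : m t = (m t - 1) + 1 := by omega
      rw [this]; push_cast; ring
    -- compute log of V t
    have hVpos : (0:ℝ) < lam ^ m t * (1 - lam) ^ (d t - m t)
        * (((d t - 1 : ℕ) : ℝ) ^ (d t - 1)
          / (((m t - 1 : ℕ) : ℝ) ^ (m t - 1) * ((d t - m t : ℕ) : ℝ) ^ (d t - m t))) := by
      have h1l : (0:ℝ) < 1 - lam := by linarith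
      positivity
    have hlogid : Real.log (lam ^ m t * (1 - lam) ^ (d t - m t)
        * (((d t - 1 : ℕ) : ℝ) ^ (d t - 1)
          / (((m t - 1 : ℕ) : ℝ) ^ (m t - 1) * ((d t - m t : ℕ) : ℝ) ^ (d t - m t))))
        = (m t : ℝ) * Real.log lam + ((d t - m t : ℕ) : ℝ) * Real.log (1 - lam)
          + ((d t - 1 : ℕ) : ℝ) * Real.log ((d t - 1 : ℕ) : ℝ)
          - ((m t - 1 : ℕ) : ℝ) * Real.log ((m t - 1 : ℕ) : ℝ)
          - ((d t - m t : ℕ) : ℝ) * Real.log ((d t - m t : ℕ) : ℝ) := by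
      have h1l : (0:ℝ) < 1 - lam := by linarith
      rw [Real.log_mul (by positivity) (by positivity), Real.log_mul (by positivity) (by positivity),
        Real.log_div (by positivity) (by positivity), Real.log_mul (by positivity) (by positivity)]
      simp only [Real.log_pow]
      push_cast
      ring
    have hkey := logV_eq lam ((m t - 1 : ℕ) : ℝ) ((d t - m t : ℕ) : ℝ) hlam0 hlam1 hApos hBpos
    rw [← hKAB] at hkey
    have hid2 : Real.log lam - (((d t - 1 : ℕ) : ℝ)
        * ((((m t - 1 : ℕ) : ℝ) - lam * ((d t - 1 : ℕ) : ℝ)) / ((d t - 1 : ℕ) : ℝ)) ^ 2)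
        * psiKL lam ((((m t - 1 : ℕ) : ℝ) - lam * ((d t - 1 : ℕ) : ℝ)) / ((d t - 1 : ℕ) : ℝ))
        = Real.log (lam ^ m t * (1 - lam) ^ (d t - m t)
          * (((d t - 1 : ℕ) : ℝ) ^ (d t - 1)
            / (((m t - 1 : ℕ) : ℝ) ^ (m t - 1) * ((d t - m t : ℕ) : ℝ) ^ (d t - m t)))) := by
      rw [hlogid, hmA]
      linarith [hkey]
    simp only [Function.comp_apply]
    rw [hid2, Real.exp_log hVpos]
  -- natural number atTop limits
  have hmN : Tendsto (fun t => m t - 1) atTop atTop := by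
    rw [← tendsto_natCast_atTop_iff (R := ℝ)]
    have h0 := tendsto_atTop_add_const_right atTop (-1 : ℝ) hmR
    apply h0.congr'
    filter_upwards [hcast] with t hc
    rw [hc.1]; ring
  have hqN : Tendsto (fun t => d t - m t) atTop atTop := by
    rw [← tendsto_natCast_atTop_iff (R := ℝ)]
    apply hdmR.congr'
    filter_upwards [hcast] with t hc
    rw [hc.2.1]
  have hrN : Tendsto (fun t => d t - 1) atTop atTop := by
    rw [← tendsto_natCast_atTop_iff (R := ℝ)]
    have hdR : Tendsto (fun t => (d t : ℝ)) atTop atTop := by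
      apply tendsto_atTop_mono _ hdmR
      intro t
      have : (0:ℝ) ≤ (m t : ℝ) := Nat.cast_nonneg _
      linarith
    have h0 := tendsto_atTop_add_const_right atTop (-1 : ℝ) hdR
    apply h0.congr'
    filter_upwards [hcast] with t hc
    rw [hc.2.2]; ring
  have hsqrtpi : (0:ℝ) < Real.sqrt Real.pi := Real.sqrt_pos.2 Real.pi_pos
  have hS : Tendsto (fun t => Stirling.stirlingSeq (d t - 1)
      / (Stirling.stirlingSeq (m t - 1) * Stirling.stirlingSeq (d t - m t))) atTop
      (𝓝 (Real.sqrt Real.pi / (Real.sqrt Real.pi * Real.sqrt Real.pi))) := by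
    exact (Stirling.tendsto_stirlingSeq_sqrt_pi.comp hrN).div
      ((Stirling.tendsto_stirlingSeq_sqrt_pi.comp hmN).mul
        (Stirling.tendsto_stirlingSeq_sqrt_pi.comp hqN)) (mul_pos hsqrtpi hsqrtpi).ne'
  -- W part
  have hU : Tendsto (fun t => t ^ ((2:ℝ)/3) * (2 * ((d t - 1 : ℕ) : ℝ))
      / ((2 * ((m t - 1 : ℕ) : ℝ)) * (2 * ((d t - m t : ℕ) : ℝ)))) atTop
      (𝓝 (2 * a / ((2 * (lam * a)) * (2 * ((1 - lam) * a))))) := by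
    have h0 := (hK2.const_mul 2).div ((hA2.const_mul 2).mul (hB2.const_mul 2))
      (mul_pos (mul_pos two_pos (mul_pos hlam0 ha)) (mul_pos two_pos (mul_pos h1lam ha))).ne'
    apply h0.congr'
    filter_upwards [hKposEv, eventually_ge_atTop (1:ℝ)] with t hKp ht1
    have ht : (0:ℝ) < t := lt_of_lt_of_le one_pos ht1
    have hT2' : (0:ℝ) < t ^ ((2:ℝ)/3) := Real.rpow_pos_of_pos ht _
    obtain ⟨hApos, hBpos, hKpos⟩ := hKp
    simp only [Pi.div_apply]
    field_simp [hT2'.ne', hApos.ne', hBpos.ne', hKpos.ne']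
  have hW : Tendsto (fun t => t ^ ((1:ℝ)/3) * Real.sqrt (2 * ((d t - 1 : ℕ) : ℝ))
      / (Real.sqrt (2 * ((m t - 1 : ℕ) : ℝ)) * Real.sqrt (2 * ((d t - m t : ℕ) : ℝ)))) atTop
      (𝓝 (Real.sqrt (2 * a / ((2 * (lam * a)) * (2 * ((1 - lam) * a)))))) := by
    have h0 := (Real.continuous_sqrt.tendsto _).comp hU
    apply h0.congr'
    filter_upwards [hKposEv, eventually_ge_atTop (1:ℝ)] with t hKp ht1
    have ht : (0:ℝ) < t := lt_of_lt_of_le one_pos ht1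
    have hT1' : (0:ℝ) < t ^ ((1:ℝ)/3) := Real.rpow_pos_of_pos ht _
    obtain ⟨hApos, hBpos, hKpos⟩ := hKp
    have hsq : (t ^ ((1:ℝ)/3)) ^ 2 = t ^ ((2:ℝ)/3) := by
      rw [sq, ← Real.rpow_add ht]; norm_num
    show Real.sqrt _ = _
    rw [Real.sqrt_div (by positivity), Real.sqrt_mul (by positivity : (0:ℝ) ≤ t ^ ((2:ℝ)/3)),
      Real.sqrt_mul (by positivity : (0:ℝ) ≤ 2 * ((m t - 1 : ℕ) : ℝ)), ← hsq,
      Real.sqrt_sq hT1'.le]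
  -- combine
  have hfinal := (hS.mul hW).mul hV
  have hvalue : Real.sqrt Real.pi / (Real.sqrt Real.pi * Real.sqrt Real.pi)
      * Real.sqrt (2 * a / ((2 * (lam * a)) * (2 * ((1 - lam) * a))))
      * (lam * Real.exp (-(lam * c ^ 2 / (2 * a * (1 - lam)))))
      = lam * Real.exp (-(lam * c ^ 2 / (2 * a * (1 - lam))))
        / Real.sqrt (2 * Real.pi * (lam * (1 - lam)) * a) := by
    have h2 : 2 * a / ((2 * (lam * a)) * (2 * ((1 - lam) * a)))
        = (2 * (lam * (1 - lam)) * a)⁻¹ := by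
      field_simp
    rw [h2, Real.sqrt_inv, div_mul_cancel_left₀ hsqrtpi.ne', ← mul_inv,
      ← Real.sqrt_mul Real.pi_pos.le,
      show Real.pi * (2 * (lam * (1 - lam)) * a) = 2 * Real.pi * (lam * (1 - lam)) * a by ring]
    ring
  rw [← hvalue]
  apply hfinal.congr'
  filter_upwards [hgood] with t htg
  obtain ⟨ht1, h2m, h3d⟩ := htg
  have hp : 1 ≤ m t - 1 := by omega
  have hq : 1 ≤ d t - m t := by omega
  have E := expr_eq (t ^ ((1:ℝ)/3)) lam (m t - 1) (d t - m t) hp hq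
  have e1 : m t - 1 + (d t - m t) = d t - 1 := by omega
  have e2 : m t - 1 + 1 = m t := by omega
  rw [e1, e2] at E
  exact E.symm

theorem Qkernel_limit
    (lam : ℝ) (hlam0 : 0 < lam) (hlam1 : lam < 1)
    (ξi ξj ui uj : ℝ) (hξ : ξi < ξj) :
    Tendsto
      (fun t : ℝ =>
        2 ^ ((1:ℝ)/3) * (lam * (1 - lam)) ^ ((2:ℝ)/3) * t ^ ((1:ℝ)/3) / lam
          * Qkernel lam ξi ξj ui uj t)
      atTop
      (nhds (Real.exp (-(uj - ui) ^ 2 / (4 * (ξj - ξi)))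
        / Real.sqrt (4 * Real.pi * (ξj - ξi)))) := by
  have h1lam : (0:ℝ) < 1 - lam := by linarith
  have hchi : (0:ℝ) < lam * (1 - lam) := mul_pos hlam0 h1lam
  have hs : (0:ℝ) < ξj - ξi := sub_pos.2 hξ
  set X : ℝ := (lam * (1 - lam)) ^ ((1:ℝ)/3) with hX_def
  set Y : ℝ := (2:ℝ) ^ ((1:ℝ)/3) with hY_def
  have hXpos : 0 < X := Real.rpow_pos_of_pos hchi _
  have hYpos : 0 < Y := Real.rpow_pos_of_pos two_pos _
  have hX3 : X ^ (3:ℕ) = lam * (1 - lam) := by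
    rw [hX_def, ← Real.rpow_natCast ((lam * (1 - lam)) ^ ((1:ℝ)/3)) 3,
      ← Real.rpow_mul hchi.le]
    norm_num
  have hY3 : Y ^ (3:ℕ) = 2 := by
    rw [hY_def, ← Real.rpow_natCast ((2:ℝ) ^ ((1:ℝ)/3)) 3, ← Real.rpow_mul (by norm_num)]
    norm_num
  have hX2 : (lam * (1 - lam)) ^ ((2:ℝ)/3) = X ^ (2:ℕ) := by
    rw [hX_def, ← Real.rpow_natCast ((lam * (1 - lam)) ^ ((1:ℝ)/3)) 2,
      ← Real.rpow_mul hchi.le]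
    norm_num
  have hY5 : (2:ℝ) ^ ((5:ℝ)/3) = Y ^ (5:ℕ) := by
    rw [hY_def, ← Real.rpow_natCast ((2:ℝ) ^ ((1:ℝ)/3)) 5, ← Real.rpow_mul (by norm_num)]
    norm_num
  set a : ℝ := Y ^ (5:ℕ) * X * (ξj - ξi) with ha_def
  set c : ℝ := Y * X ^ (2:ℕ) * (uj - ui) / lam with hc_def
  have ha : 0 < a := by positivity
  set m : ℝ → ℕ := fun t => (nIdx lam ξj t - nIdx lam ξi t).toNat with hm_def
  set d : ℝ → ℕ := fun t => (xIdx lam ξi ui t - xIdx lam ξj uj t).toNat with hd_def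
  -- floor bounds
  have hDn : ∀ t : ℝ, |((nIdx lam ξj t - nIdx lam ξi t : ℤ) : ℝ) - lam * a * t ^ ((2:ℝ)/3)| ≤ 1 := by
    intro t
    have h1 : ((nIdx lam ξj t : ℤ) : ℝ)
        ≤ lam ^ 2 * t + lam * 2 ^ ((5:ℝ)/3) * X * ξj * t ^ ((2:ℝ)/3) := Int.floor_le _
    have h2 : lam ^ 2 * t + lam * 2 ^ ((5:ℝ)/3) * X * ξj * t ^ ((2:ℝ)/3) - 1
        < ((nIdx lam ξj t : ℤ) : ℝ) := Int.sub_one_lt_floor _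
    have h3 : ((nIdx lam ξi t : ℤ) : ℝ)
        ≤ lam ^ 2 * t + lam * 2 ^ ((5:ℝ)/3) * X * ξi * t ^ ((2:ℝ)/3) := Int.floor_le _
    have h4 : lam ^ 2 * t + lam * 2 ^ ((5:ℝ)/3) * X * ξi * t ^ ((2:ℝ)/3) - 1
        < ((nIdx lam ξi t : ℤ) : ℝ) := Int.sub_one_lt_floor _
    have hco : lam * 2 ^ ((5:ℝ)/3) * X * ξj * t ^ ((2:ℝ)/3)
        - lam * 2 ^ ((5:ℝ)/3) * X * ξi * t ^ ((2:ℝ)/3) = lam * a * t ^ ((2:ℝ)/3) := by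
      rw [hY5, ha_def]; ring
    rw [abs_le]
    push_cast
    constructor <;> linarith
  have hDx : ∀ t : ℝ, |((xIdx lam ξi ui t - xIdx lam ξj uj t : ℤ) : ℝ)
      - a * t ^ ((2:ℝ)/3) - c * t ^ ((1:ℝ)/3)| ≤ 1 := by
    intro t
    have h1 : ((xIdx lam ξi ui t : ℤ) : ℝ)
        ≤ (1 - 2*lam) * t - 2 ^ ((5:ℝ)/3) * X * ξi * t ^ ((2:ℝ)/3)
          - 2 ^ ((1:ℝ)/3) * (lam * (1 - lam)) ^ ((2:ℝ)/3) * (ui / lam) * t ^ ((1:ℝ)/3) :=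
      Int.floor_le _
    have h2 : (1 - 2*lam) * t - 2 ^ ((5:ℝ)/3) * X * ξi * t ^ ((2:ℝ)/3)
          - 2 ^ ((1:ℝ)/3) * (lam * (1 - lam)) ^ ((2:ℝ)/3) * (ui / lam) * t ^ ((1:ℝ)/3) - 1
        < ((xIdx lam ξi ui t : ℤ) : ℝ) := Int.sub_one_lt_floor _
    have h3 : ((xIdx lam ξj uj t : ℤ) : ℝ)
        ≤ (1 - 2*lam) * t - 2 ^ ((5:ℝ)/3) * X * ξj * t ^ ((2:ℝ)/3)
          - 2 ^ ((1:ℝ)/3) * (lam * (1 - lam)) ^ ((2:ℝ)/3) * (uj / lam) * t ^ ((1:ℝ)/3) :=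
      Int.floor_le _
    have h4 : (1 - 2*lam) * t - 2 ^ ((5:ℝ)/3) * X * ξj * t ^ ((2:ℝ)/3)
          - 2 ^ ((1:ℝ)/3) * (lam * (1 - lam)) ^ ((2:ℝ)/3) * (uj / lam) * t ^ ((1:ℝ)/3) - 1
        < ((xIdx lam ξj uj t : ℤ) : ℝ) := Int.sub_one_lt_floor _
    have hco : (2 ^ ((5:ℝ)/3) * X * ξj * t ^ ((2:ℝ)/3)
          - 2 ^ ((5:ℝ)/3) * X * ξi * t ^ ((2:ℝ)/3)) = a * t ^ ((2:ℝ)/3) := by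
      rw [hY5, ha_def]; ring
    have hco2 : 2 ^ ((1:ℝ)/3) * (lam * (1 - lam)) ^ ((2:ℝ)/3) * (uj / lam) * t ^ ((1:ℝ)/3)
          - 2 ^ ((1:ℝ)/3) * (lam * (1 - lam)) ^ ((2:ℝ)/3) * (ui / lam) * t ^ ((1:ℝ)/3)
        = c * t ^ ((1:ℝ)/3) := by
      rw [hX2, hc_def, ← hY_def]
      field_simp
    rw [abs_le]
    push_cast
    constructor <;> linarith
  -- growth
  have hT1 : Tendsto (fun t : ℝ => t ^ ((1:ℝ)/3)) atTop atTop := tendsto_rpow_atTop (by norm_num)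
  have hT2 : Tendsto (fun t : ℝ => t ^ ((2:ℝ)/3)) atTop atTop := tendsto_rpow_atTop (by norm_num)
  have hgrow1 : Tendsto (fun t : ℝ => lam * a * t ^ ((2:ℝ)/3) - 2) atTop atTop :=
    tendsto_atTop_add_const_right atTop _ (hT2.const_mul_atTop (mul_pos hlam0 ha))
  have hgrow2 : Tendsto (fun t : ℝ => t ^ ((1:ℝ)/3) * ((1 - lam) * a * t ^ ((1:ℝ)/3) + c) - 3)
      atTop atTop :=
    tendsto_atTop_add_const_right atTop _
      (hT1.atTop_mul_atTop₀ (tendsto_atTop_add_const_right atTop c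
        (hT1.const_mul_atTop (mul_pos h1lam ha))))
  have hev : ∀ᶠ t : ℝ in atTop, 1 ≤ nIdx lam ξj t - nIdx lam ξi t
      ∧ nIdx lam ξj t - nIdx lam ξi t + 1 ≤ xIdx lam ξi ui t - xIdx lam ξj uj t := by
    filter_upwards [hgrow1.eventually_ge_atTop 1, hgrow2.eventually_ge_atTop 1,
      eventually_ge_atTop (1:ℝ)] with t h1 h2 ht1
    have ht : (0:ℝ) < t := lt_of_lt_of_le one_pos ht1
    have hmul : t ^ ((1:ℝ)/3) * t ^ ((1:ℝ)/3) = t ^ ((2:ℝ)/3) := by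
      rw [← Real.rpow_add ht]; norm_num
    have hb1 := abs_le.1 (hDn t)
    have hb2 := abs_le.1 (hDx t)
    have h2' : (1 - lam) * a * t ^ ((2:ℝ)/3) + c * t ^ ((1:ℝ)/3) - 3 ≥ 1 := by
      have : t ^ ((1:ℝ)/3) * ((1 - lam) * a * t ^ ((1:ℝ)/3) + c)
          = (1 - lam) * a * t ^ ((2:ℝ)/3) + c * t ^ ((1:ℝ)/3) := by
        rw [← hmul]; ring
      linarith [h2, this ▸ h2]
    constructor
    · have : (1:ℝ) ≤ ((nIdx lam ξj t - nIdx lam ξi t : ℤ) : ℝ) := by linarith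
      exact_mod_cast this
    · have : ((nIdx lam ξj t - nIdx lam ξi t : ℤ) : ℝ) + 1
          ≤ ((xIdx lam ξi ui t - xIdx lam ξj uj t : ℤ) : ℝ) := by linarith
      exact_mod_cast this
  -- master hypotheses
  have hinvT1 : Tendsto (fun t : ℝ => (t ^ ((1:ℝ)/3))⁻¹) atTop (𝓝 0) := hT1.inv_tendsto_atTop
  have hm : Tendsto (fun t => ((m t : ℝ) - lam * a * t ^ ((2:ℝ)/3)) / t ^ ((1:ℝ)/3)) atTop
      (𝓝 0) := by
    apply squeeze_zero_norm' _ hinvT1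
    filter_upwards [hev, eventually_ge_atTop (1:ℝ)] with t htev ht1
    have ht : (0:ℝ) < t := lt_of_lt_of_le one_pos ht1
    have hT1' : (0:ℝ) < t ^ ((1:ℝ)/3) := Real.rpow_pos_of_pos ht _
    have hcastm : ((m t : ℕ) : ℝ) = ((nIdx lam ξj t - nIdx lam ξi t : ℤ) : ℝ) := by
      rw [hm_def]
      exact_mod_cast Int.toNat_of_nonneg (by omega)
    rw [Real.norm_eq_abs, abs_div, abs_of_pos hT1', div_le_iff₀ hT1', inv_mul_cancel₀ hT1'.ne']
    rw [hcastm]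
    exact hDn t
  have hd : Tendsto (fun t => ((d t : ℝ) - a * t ^ ((2:ℝ)/3) - c * t ^ ((1:ℝ)/3))
      / t ^ ((1:ℝ)/3)) atTop (𝓝 0) := by
    apply squeeze_zero_norm' _ hinvT1
    filter_upwards [hev, eventually_ge_atTop (1:ℝ)] with t htev ht1
    have ht : (0:ℝ) < t := lt_of_lt_of_le one_pos ht1
    have hT1' : (0:ℝ) < t ^ ((1:ℝ)/3) := Real.rpow_pos_of_pos ht _
    have hcastd : ((d t : ℕ) : ℝ) = ((xIdx lam ξi ui t - xIdx lam ξj uj t : ℤ) : ℝ) := by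
      rw [hd_def]
      exact_mod_cast Int.toNat_of_nonneg (by omega)
    rw [Real.norm_eq_abs, abs_div, abs_of_pos hT1', div_le_iff₀ hT1', inv_mul_cancel₀ hT1'.ne']
    rw [hcastd]
    exact hDx t
  have hmaster := master lam a c hlam0 hlam1 ha m d hm hd
  have htarget := hmaster.const_mul (Y * X ^ (2:ℕ) / lam)
  -- constant identity
  have hsqrtpis : (0:ℝ) < Real.sqrt (Real.pi * (ξj - ξi)) :=
    Real.sqrt_pos.2 (by positivity)
  have hsq1 : Real.sqrt (2 * Real.pi * (lam * (1 - lam)) * a)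
      = Y ^ (4:ℕ) * X ^ (2:ℕ) * Real.sqrt (Real.pi * (ξj - ξi)) := by
    have harg : 2 * Real.pi * (lam * (1 - lam)) * a
        = (Y ^ (4:ℕ) * X ^ (2:ℕ)) ^ 2 * (Real.pi * (ξj - ξi)) := by
      rw [← hY3, ← hX3, ha_def]; ring
    rw [harg, Real.sqrt_mul (by positivity), Real.sqrt_sq (by positivity)]
  have hsq2 : Real.sqrt (4 * Real.pi * (ξj - ξi)) = 2 * Real.sqrt (Real.pi * (ξj - ξi)) := by
    have harg : 4 * Real.pi * (ξj - ξi) = (2:ℝ) ^ 2 * (Real.pi * (ξj - ξi)) := by ring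
    rw [harg, Real.sqrt_mul (by positivity), Real.sqrt_sq (by norm_num)]
  have hexpeq : lam * c ^ 2 / (2 * a * (1 - lam)) = (uj - ui) ^ 2 / (4 * (ξj - ξi)) := by
    rw [hc_def, ha_def]
    rw [div_eq_div_iff (by positivity) (by positivity)]
    field_simp
    linear_combination (4*(uj-ui)^2)*hX3
      - (2*lam*(1-lam)*(uj-ui)^2)*hY3
  have hconst : Y * X ^ (2:ℕ) / lam
        * (lam * Real.exp (-(lam * c ^ 2 / (2 * a * (1 - lam))))
          / Real.sqrt (2 * Real.pi * (lam * (1 - lam)) * a))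
      = Real.exp (-(uj - ui) ^ 2 / (4 * (ξj - ξi))) / Real.sqrt (4 * Real.pi * (ξj - ξi)) := by
    rw [hsq1, hsq2, hexpeq, neg_div]
    field_simp
    linear_combination -hY3
  rw [← hconst]
  apply htarget.congr'
  filter_upwards [hev] with t htev
  obtain ⟨he1, he2⟩ := htev
  have hz : (nIdx lam ξi t - nIdx lam ξj t) + (xIdx lam ξi ui t - xIdx lam ξj uj t)
      = ((d t - m t : ℕ) : ℤ) := by
    rw [hm_def, hd_def]
    simp only []
    omega
  have hz2 : nIdx lam ξj t - nIdx lam ξi t = ((m t : ℕ) : ℤ) := by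
    rw [hm_def]; simp only []; omega
  have hz3 : (xIdx lam ξi ui t - xIdx lam ξj uj t - 1).toNat = d t - 1 := by
    rw [hd_def]; simp only []; omega
  have hz4 : (nIdx lam ξj t - nIdx lam ξi t - 1).toNat = m t - 1 := by
    rw [hm_def]; simp only []; omega
  rw [Qkernel, hz3, hz4, hz, hz2, zpow_natCast, zpow_natCast, hX2]
  ring
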